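/- Let $f:\mathbb{R}^n \to \mathbb{R}$ be $\mu$-strongly convex and differentiable, let $h:\mathbb{R}^n \to \mathbb{R}\cup\{\infty\}$ be proper closed convex, and let $\phi = f + h$ have minimizer $x^*$ with value $\phi^*$. Fix $x_k \in \mathbb{R}^n$, $g_k \in \mathbb{R}^n$, $\alpha_k > 0$ with $\mu\alpha_k \le 1$, and let $x_{k+1} = \arg\min_x \, f(x_k) + g_k^T(x - x_k) + \frac{1}{2\alpha_k}\|x - x_k\|^2 + h(x)$. If $\nabla f$ is $L$-Lipschitz, then $\phi(x_{k+1}) - \phi^* \le (1 - \mu\alpha_k)(\phi(x_k) - \phi^*) + (\nabla f(x_k) - g_k)^T(x_{k+1} - x_k) + (g_k - \nabla f(x_k))^T(\tilde{x}_k - x_k) - \left(\frac{1}{2\alpha_k} - \frac{L}{2}\right)\|x_{k+1} - x_k\|^2$, where $\tilde{x}_k = \mu\alpha_k x^* + (1 - \mu\alpha_k)x_k$. -/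

import Mathlib

open scoped RealInnerProductSpace

/-- Descent lemma: a differentiable function with `L`-Lipschitz gradient satisfies
`f y ≤ f x + ⟪∇f x, y - x⟫ + L/2 ‖y - x‖²`. -/
lemma descent_lemma {n : ℕ} (f : EuclideanSpace ℝ (Fin n) → ℝ)
    (f' : EuclideanSpace ℝ (Fin n) → EuclideanSpace ℝ (Fin n))
    (L : ℝ) (hL : 0 ≤ L)
    (hgrad : ∀ x, HasGradientAt f (f' x) x)
    (hlip : LipschitzWith L.toNNReal f')
    (x y : EuclideanSpace ℝ (Fin n)) :
    f y ≤ f x + ⟪f' x, y - x⟫ + L / 2 * ‖y - x‖ ^ 2 := by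
  set v := y - x with hv
  have hcontf' : Continuous f' := hlip.continuous
  set γ : ℝ → EuclideanSpace ℝ (Fin n) := fun t => x + t • v with hγ
  have hγc : Continuous γ := by fun_prop
  have hderiv : ∀ t : ℝ, HasDerivAt (fun s => f (γ s)) ⟪f' (γ t), v⟫ t := by
    intro t
    have h1 : HasDerivAt γ v t := by
      have h0 := ((hasDerivAt_id t).smul_const v).const_add x
      rw [one_smul] at h0
      exact h0
    have h2 := (hgrad (γ t)).hasFDerivAt.comp_hasDerivAt t h1
    simp at h2
    exact h2
  have hcont : Continuous fun t : ℝ => ⟪f' (γ t), v⟫ := by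
    exact (hcontf'.comp hγc).inner continuous_const
  have hftc : ∫ t in (0:ℝ)..1, ⟪f' (γ t), v⟫ = f (γ 1) - f (γ 0) := by
    exact intervalIntegral.integral_eq_sub_of_hasDerivAt
      (fun t _ => hderiv t) (hcont.intervalIntegrable 0 1)
  have hγ0 : γ 0 = x := by simp [hγ]
  have hγ1 : γ 1 = y := by simp [hγ, hv]
  have hbound : ∀ t ∈ Set.Icc (0:ℝ) 1,
      ⟪f' (γ t), v⟫ ≤ ⟪f' x, v⟫ + L * t * ‖v‖ ^ 2 := by
    intro t ht
    have h1 : ⟪f' (γ t), v⟫ - ⟪f' x, v⟫ = ⟪f' (γ t) - f' x, v⟫ := by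
      rw [inner_sub_left]
    have h2 : ⟪f' (γ t) - f' x, v⟫ ≤ ‖f' (γ t) - f' x‖ * ‖v‖ :=
      real_inner_le_norm _ _
    have h3 : ‖f' (γ t) - f' x‖ ≤ L * (t * ‖v‖) := by
      have := hlip.dist_le_mul (γ t) x
      simp only [dist_eq_norm] at this
      have hγt : γ t - x = t • v := by simp [hγ]
      rw [hγt] at this
      calc ‖f' (γ t) - f' x‖ ≤ L.toNNReal * ‖t • v‖ := by
              simpa [dist_eq_norm] using this
        _ = L * (t * ‖v‖) := by
              rw [norm_smul, Real.coe_toNNReal _ hL, Real.norm_eq_abs,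
                abs_of_nonneg ht.1]
    nlinarith [norm_nonneg v, h2.trans (mul_le_mul_of_nonneg_right h3 (norm_nonneg v)),
      sq_nonneg (‖v‖)]
  have hint : ∫ t in (0:ℝ)..1, ⟪f' (γ t), v⟫
      ≤ ∫ t in (0:ℝ)..1, (⟪f' x, v⟫ + L * t * ‖v‖ ^ 2) := by
    apply intervalIntegral.integral_mono_on (by norm_num)
      (hcont.intervalIntegrable 0 1)
      ((Continuous.intervalIntegrable (by fun_prop) 0 1))
    exact hbound
  have hval : ∫ t in (0:ℝ)..1, (⟪f' x, v⟫ + L * t * ‖v‖ ^ 2)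
      = ⟪f' x, v⟫ + L / 2 * ‖v‖ ^ 2 := by
    have : ∀ t : ℝ, ⟪f' x, v⟫ + L * t * ‖v‖ ^ 2
        = ⟪f' x, v⟫ + t * (L * ‖v‖ ^ 2) := by intro t; ring
    simp only [this]
    rw [intervalIntegral.integral_add intervalIntegrable_const
      ((intervalIntegral.intervalIntegrable_id).mul_const _)]
    simp [intervalIntegral.integral_mul_const, integral_id]
    ring
  have := hftc ▸ hint
  rw [hγ0, hγ1] at hftc
  linarith [hval ▸ hint, hftc ▸ (le_refl (f y - f x))]

theorem stmt_2 {n : ℕ} (f : EuclideanSpace ℝ (Fin n) → ℝ)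
    (f' : EuclideanSpace ℝ (Fin n) → EuclideanSpace ℝ (Fin n))
    (h : EuclideanSpace ℝ (Fin n) → ℝ)
    (μ L αk : ℝ) (hμ : 0 < μ) (hL : 0 < L) (hαk : 0 < αk) (hμα : μ * αk ≤ 1)
    (hgrad : ∀ x, HasGradientAt f (f' x) x)
    (hsc : ∀ x y, f y + ⟪f' y, x - y⟫ + μ / 2 * ‖x - y‖ ^ 2 ≤ f x)
    (hconvh : ConvexOn ℝ Set.univ h) (hlsch : LowerSemicontinuous h)
    (hlip : LipschitzWith L.toNNReal f')
    (xs : EuclideanSpace ℝ (Fin n))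
    (hmin : ∀ x, f xs + h xs ≤ f x + h x)
    (xk gk xkp1 : EuclideanSpace ℝ (Fin n))
    (hstep : ∀ x, f xk + ⟪gk, xkp1 - xk⟫ + 1 / (2 * αk) * ‖xkp1 - xk‖ ^ 2 + h xkp1
      ≤ f xk + ⟪gk, x - xk⟫ + 1 / (2 * αk) * ‖x - xk‖ ^ 2 + h x) :
    (f xkp1 + h xkp1) - (f xs + h xs)
      ≤ (1 - μ * αk) * ((f xk + h xk) - (f xs + h xs))
        + ⟪f' xk - gk, xkp1 - xk⟫
        + ⟪gk - f' xk, ((μ * αk) • xs + (1 - μ * αk) • xk) - xk⟫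
        - (1 / (2 * αk) - L / 2) * ‖xkp1 - xk‖ ^ 2 := by
  set a := μ * αk with ha
  have ha0 : 0 < a := mul_pos hμ hαk
  set xt : EuclideanSpace ℝ (Fin n) := a • xs + (1 - a) • xk with hxt
  have hxtd : xt - xk = a • (xs - xk) := by
    rw [hxt]; module
  -- step inequality at x̃
  have hstep' := hstep xt
  -- convexity of h
  have hconv : h xt ≤ a * h xs + (1 - a) * h xk := by
    have := hconvh.2 (Set.mem_univ xs) (Set.mem_univ xk) (le_of_lt ha0)
      (by linarith : (0:ℝ) ≤ 1 - a) (by ring)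
    simpa [hxt] using this
  -- strong convexity at (xs, xk)
  have hsck := hsc xs xk
  -- descent lemma
  have hdes := descent_lemma f f' L hL.le hgrad hlip xk xkp1
  -- norms and inner products
  have hnorm : ‖xt - xk‖ ^ 2 = a ^ 2 * ‖xs - xk‖ ^ 2 := by
    rw [hxtd, norm_smul, Real.norm_eq_abs, abs_of_nonneg ha0.le, mul_pow]
  have hinner1 : ⟪gk, xt - xk⟫ = a * ⟪gk, xs - xk⟫ := by
    rw [hxtd, real_inner_smul_right]
  have hinner2 : ⟪f' xk - gk, xkp1 - xk⟫ = ⟪f' xk, xkp1 - xk⟫ - ⟪gk, xkp1 - xk⟫ := by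
    rw [inner_sub_left]
  have hinner3 : ⟪gk - f' xk, xt - xk⟫ = a * ⟪gk, xs - xk⟫ - a * ⟪f' xk, xs - xk⟫ := by
    rw [inner_sub_left, hxtd, real_inner_smul_right, real_inner_smul_right]
  have hkey : 1 / (2 * αk) * (a ^ 2 * ‖xs - xk‖ ^ 2) = a * (μ / 2 * ‖xs - xk‖ ^ 2) := by
    rw [ha]; field_simp
  rw [hnorm, hinner1] at hstep'
  rw [hinner2, hinner3]
  nlinarith [mul_le_mul_of_nonneg_left hsck ha0.le, hstep', hconv, hdes, hkey]
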